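/- Let F ⊆ ℕ, let A = ⋃_{i∈F} I(i), and let P_A be the canonical block projection of X = c0(⊕_{n=1}^∞ ℓ2^n) onto the coordinates in A. Let 0 < ε < 1 and let Y be a uniformly convex Banach space with modulus of convexity δ(ε). If T : X → Y is a bounded linear operator with ‖T‖ = 1 and ‖T∘P_A‖ > 1 − δ(ε), then ‖T∘(I − P_A)‖ ≤ ε. -/
import Mathlib


open Filter Topology

noncomputable section

/-- The Euclidean space `ℓ₂ⁿ⁺¹` forming the `n`-th block (so blocks have dimensions 1, 2, 3, …),
i.e. the block `I(n+1)` of the paper. -/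
abbrev E2 (n : ℕ) : Type := EuclideanSpace ℝ (Fin (n + 1))

/-- `c₀(⊕ₙ ℓ₂ⁿ)`: the subspace of the `ℓ∞`-sum of the spaces `ℓ₂ⁿ` consisting of those
elements whose block norms tend to `0`; it carries the norm `‖x‖ = sup_n ‖x n‖`. -/
def c0E2 : Submodule ℝ (lp E2 ⊤) where
  carrier := {x | Tendsto (fun n => ‖x n‖) atTop (𝓝 0)}
  add_mem' := by
    intro x y hx hy
    refine squeeze_zero (fun n => norm_nonneg _) (fun n => ?_) (by simpa using hx.add hy)
    rw [lp.coeFn_add]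
    exact norm_add_le _ _
  zero_mem' := by
    simp only [Set.mem_setOf_eq, lp.coeFn_zero, Pi.zero_apply, norm_zero]
    exact tendsto_const_nhds
  smul_mem' := by
    intro c x hx
    have h : ∀ n, ‖(c • x : lp E2 ⊤) n‖ = ‖c‖ * ‖x n‖ := by
      intro n; rw [lp.coeFn_smul]; simp [norm_smul]
    have := hx.const_mul ‖c‖
    simp only [mul_zero] at this
    exact Tendsto.congr (fun n => (h n).symm) this

/-- The standard unit basis vector of `c₀(⊕ₙ ℓ₂ⁿ)` sitting in block `j` at coordinate `i`. -/
def stdBasis (j : ℕ) (i : Fin (j + 1)) : c0E2 :=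
  ⟨lp.single ⊤ j (EuclideanSpace.single i 1), by
    refine Tendsto.congr' ?_ (tendsto_const_nhds : Tendsto (fun _ : ℕ => (0:ℝ)) atTop (𝓝 0))
    filter_upwards [eventually_gt_atTop j] with n hn
    rw [lp.single_apply_ne ⊤ j _ (by omega : n ≠ j), norm_zero]⟩

/-- The modulus of convexity of `Y`:
`δ(ε) = inf {1 - ‖(x + y)/2‖ : x, y ∈ B_Y, ‖x - y‖ ≥ ε}`. -/
def modulusOfConvexity (Y : Type*) [NormedAddCommGroup Y] (ε : ℝ) : ℝ :=
  sInf {d : ℝ | ∃ x y : Y, ‖x‖ ≤ 1 ∧ ‖y‖ ≤ 1 ∧ ε ≤ ‖x - y‖ ∧ d = 1 - ‖x + y‖ / 2}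

set_option maxHeartbeats 1000000

/-- Lemma 4 of the paper. Let `F ⊆ ℕ` be a set of block indices and let `P`
be the canonical block projection of `c₀(⊕ₙ ℓ₂ⁿ)` onto the blocks in `F`. If `Y` is uniformly
convex with modulus of convexity `δ`, `0 < ε < 1`, and `T` is a norm-one operator with
`‖T ∘ P‖ > 1 - δ(ε)`, then `‖T ∘ (I - P)‖ ≤ ε`. -/
theorem stmt4 (Y : Type*) [NormedAddCommGroup Y] [NormedSpace ℝ Y]
    [UniformConvexSpace Y] [CompleteSpace Y]
    (F : Set ℕ) [DecidablePred (· ∈ F)] (P : c0E2 →L[ℝ] c0E2)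
    (hP : ∀ (x : c0E2) (n : ℕ),
      ((P x : lp E2 ⊤) n) = if n ∈ F then (x : lp E2 ⊤) n else 0)
    (ε : ℝ) (hε0 : 0 < ε) (hε1 : ε < 1)
    (T : c0E2 →L[ℝ] Y) (hT : ‖T‖ = 1)
    (hTP : 1 - modulusOfConvexity Y ε < ‖T.comp P‖) :
    ‖T.comp (ContinuousLinearMap.id ℝ c0E2 - P)‖ ≤ ε := by
  -- Key geometric fact: mixing coordinates of two unit vectors stays in the unit ball
  have key : ∀ (u v : c0E2), ‖u‖ ≤ 1 → ‖v‖ ≤ 1 → ‖P u + (v - P v)‖ ≤ 1 := by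
    intro u v hu hv
    have hcoord : ∀ n, ‖((P u + (v - P v) : c0E2) : lp E2 ⊤) n‖ ≤ 1 := by
      intro n
      have h1 : ((P u + (v - P v) : c0E2) : lp E2 ⊤) n
          = (P u : lp E2 ⊤) n + ((v : lp E2 ⊤) n - (P v : lp E2 ⊤) n) := by
        simp
      rw [h1, hP, hP]
      by_cases hn : n ∈ F
      · simp only [hn, if_true]
        have := lp.norm_apply_le_norm (ENNReal.top_ne_zero) (u : lp E2 ⊤) n
        calc ‖(u : lp E2 ⊤) n + ((v : lp E2 ⊤) n - (v : lp E2 ⊤) n)‖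
            = ‖(u : lp E2 ⊤) n‖ := by rw [sub_self, add_zero]
          _ ≤ ‖(u : lp E2 ⊤)‖ := this
          _ ≤ 1 := hu
      · simp only [hn, if_false]
        have := lp.norm_apply_le_norm (ENNReal.top_ne_zero) (v : lp E2 ⊤) n
        calc ‖(0 : E2 n) + ((v : lp E2 ⊤) n - 0)‖ = ‖(v : lp E2 ⊤) n‖ := by
              rw [sub_zero, zero_add]
          _ ≤ ‖(v : lp E2 ⊤)‖ := this
          _ ≤ 1 := hv
    exact lp.norm_le_of_forall_le zero_le_one hcoord
  by_contra hcon
  push_neg at hcon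
  obtain ⟨v, hv1, hv2⟩ :=
    (T.comp (ContinuousLinearMap.id ℝ c0E2 - P)).exists_lt_apply_of_lt_opNorm hcon
  obtain ⟨u, hu1, hu2⟩ := (T.comp P).exists_lt_apply_of_lt_opNorm hTP
  set q : c0E2 := v - P v with hq
  have hTq : ε < ‖T q‖ := by
    simpa [hq, ContinuousLinearMap.comp_apply, ContinuousLinearMap.sub_apply, map_sub] using hv2
  set a := T (P u + q) with ha_def
  set b := T (P u - q) with hb_def
  have ha : ‖a‖ ≤ 1 := by
    calc ‖T (P u + q)‖ ≤ ‖T‖ * ‖P u + q‖ := T.le_opNorm _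
      _ ≤ 1 := by rw [hT, one_mul]; exact key u v hu1.le hv1.le
  have hb : ‖b‖ ≤ 1 := by
    have hneg : P u - q = P u + ((-v) - P (-v)) := by
      rw [hq, map_neg]; abel
    calc ‖T (P u - q)‖ ≤ ‖T‖ * ‖P u - q‖ := T.le_opNorm _
      _ ≤ 1 := by
          rw [hT, one_mul, hneg]
          exact key u (-v) hu1.le (by rw [norm_neg]; exact hv1.le)
  have hsum : a + b = T (P u) + T (P u) := by
    rw [ha_def, hb_def, ← map_add, ← map_add]
    congr 1
    abel
  have hdiff : a - b = T q + T q := by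
    rw [ha_def, hb_def, ← map_sub, ← map_add]
    congr 1
    abel
  have hnormsum : ‖a + b‖ = 2 * ‖T (P u)‖ := by
    rw [hsum, ← two_smul ℝ (T (P u)), norm_smul]
    norm_num
  have hnormdiff : ε ≤ ‖a - b‖ := by
    rw [hdiff, ← two_smul ℝ (T q), norm_smul]
    have : ‖(2:ℝ)‖ = 2 := by norm_num
    rw [this]
    nlinarith [norm_nonneg (T q)]
  have hbdd : BddBelow {d : ℝ | ∃ x y : Y, ‖x‖ ≤ 1 ∧ ‖y‖ ≤ 1 ∧ ε ≤ ‖x - y‖ ∧ d = 1 - ‖x + y‖ / 2} := by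
    refine ⟨0, ?_⟩
    rintro d ⟨x, y, hx, hy, -, rfl⟩
    have := norm_add_le x y
    linarith
  have hmem : 1 - ‖a + b‖ / 2 ∈
      {d : ℝ | ∃ x y : Y, ‖x‖ ≤ 1 ∧ ‖y‖ ≤ 1 ∧ ε ≤ ‖x - y‖ ∧ d = 1 - ‖x + y‖ / 2} :=
    ⟨a, b, ha, hb, hnormdiff, rfl⟩
  have hδ : modulusOfConvexity Y ε ≤ 1 - ‖a + b‖ / 2 := csInf_le hbdd hmem
  have hup : ‖(T.comp P) u‖ = ‖T (P u)‖ := rfl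
  rw [hup] at hu2
  rw [hnormsum] at hδ
  linarith
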